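/- A finite ranked meet semi-lattice P has the diamond property if and only if for every x̂ ∈ P, every x covering x̂, and every y > x̂, there exists y' ∈ P with x̂ ≤ y', y' covered by y, and x not ≤ y'. -/

import Mathlib

/-- The rank function is compatible with the covering relation. -/
def CoverRank {P : Type*} [PartialOrder P] (rk : P → ℕ) : Prop :=
  ∀ a b : P, a ⋖ b → rk b = rk a + 1

/-- The rank function is strictly monotone (the poset is graded). -/
def RankStrictMono {P : Type*} [PartialOrder P] (rk : P → ℕ) : Prop :=
  ∀ a b : P, a < b → rk a < rk b

/-- The diamond property: every interval of rank 2 contains at least two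
intermediate elements. -/
def DiamondProp {P : Type*} [PartialOrder P] (rk : P → ℕ) : Prop :=
  ∀ x y : P, x < y → rk y = rk x + 2 →
    ∃ a b : P, a ≠ b ∧ a ∈ Set.Ioo x y ∧ b ∈ Set.Ioo x y

/-- The parallelogram property (Definition of the paper): for every `x̂` and every
`y > x̂`, if the chain `x̂ = x 0 ⋖ x 1 ⋖ ... ⋖ x r` (`r > 0`) equals the closed
interval `[x̂, x r]`, is maximal w.r.t. inclusion among chain-intervals above `x̂`,
and `r` is less than the rank of `y` in `P(x̂)`, then whenever `x i < y` and
`x (i+1) ≰ y` for some `0 < i ≤ r` (interpreting, for `i = r`, the latter as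
`[x̂, y]` is not a chain), there exists `y'` with `x̂ ≤ y'`, `y' ⋖ y`,
`x (i-1) < y'` and `¬ x i ≤ y'`. -/
def ParallelogramProp {P : Type*} [PartialOrder P] (rk : P → ℕ) : Prop :=
  ∀ (xh y : P) (r : ℕ) (x : ℕ → P),
    xh < y → 0 < r → x 0 = xh →
    (∀ j, j < r → x j ⋖ x (j + 1)) →
    Set.Icc xh (x r) = {p | ∃ j ≤ r, p = x j} →
    (∀ z : P, x r < z → ¬ IsChain (· ≤ ·) (Set.Icc xh z)) →
    r < rk y - rk xh →
    ∀ i, 0 < i → i ≤ r → x i < y →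
      ((i < r ∧ ¬ x (i + 1) ≤ y) ∨ (i = r ∧ ¬ IsChain (· ≤ ·) (Set.Icc xh y))) →
      ∃ y' : P, xh ≤ y' ∧ y' ⋖ y ∧ x (i - 1) < y' ∧ ¬ x i ≤ y'


section Aux
variable {P : Type*} [PartialOrder P] [Finite P] {rk : P → ℕ}

lemma covBy_of_rank_succ (hm : RankStrictMono rk) {a b : P} (hab : a < b)
    (hr : rk b = rk a + 1) : a ⋖ b := by
  refine ⟨hab, fun c hac hcb => ?_⟩
  have h1 := hm _ _ hac
  have h2 := hm _ _ hcb
  omega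

lemma exists_le_cov {a b : P} (h : a < b) : ∃ z, a ≤ z ∧ z ⋖ b := by
  obtain ⟨z, ⟨hz1, hz2⟩, hz3⟩ := Set.Finite.exists_maximalFor id {z | a ≤ z ∧ z < b}
    (Set.toFinite _) ⟨a, le_refl a, h⟩
  exact ⟨z, hz1, hz2, fun c hzc hcb =>
    absurd (le_antisymm hzc.le (hz3 ⟨hz1.trans hzc.le, hcb⟩ hzc.le)) hzc.ne⟩

lemma exists_cov_le {a b : P} (h : a < b) : ∃ z, a ⋖ z ∧ z ≤ b := by
  obtain ⟨z, ⟨hz1, hz2⟩, hz3⟩ := Set.Finite.exists_minimalFor id {z | a < z ∧ z ≤ b}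
    (Set.toFinite _) ⟨b, h, le_refl b⟩
  exact ⟨z, ⟨hz1, fun c hac hcz =>
    absurd (le_antisymm hcz.le (hz3 ⟨hac, hcz.le.trans hz2⟩ hcz.le)) hcz.ne⟩, hz2⟩

end Aux

lemma star_of_diamond {P : Type*} [SemilatticeInf P] [Fintype P]
    (rk : P → ℕ) (hc : CoverRank rk) (hm : RankStrictMono rk) (hd : DiamondProp rk) :
    ∀ n : ℕ, ∀ xh x y : P, rk y < n → xh ⋖ x → xh < y →
      ∃ y' : P, xh ≤ y' ∧ y' ⋖ y ∧ ¬ x ≤ y' := by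
  intro n
  induction n with
  | zero => intro xh x y hry; omega
  | succ n ih =>
    intro xh x y hry hxx hxy
    by_cases hxley : x ≤ y
    · rcases eq_or_lt_of_le hxley with rfl | hlt
      · exact ⟨xh, le_refl xh, hxx, fun h => absurd (le_antisymm h hxx.lt.le) hxx.lt.ne'⟩
      · obtain ⟨z, hxz, hzy⟩ := exists_le_cov hlt
        have hrzy : rk y = rk z + 1 := hc _ _ hzy
        have hxhz : xh < z := lt_of_lt_of_le hxx.lt hxz
        have hrzn : rk z < n := by
          have := hm _ _ hzy.lt; omega
        obtain ⟨z', hz'1, hz'2, hz'3⟩ := ih xh x z hrzn hxx hxhz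
        have hz'y : z' < y := hz'2.lt.trans hzy.lt
        have hrz' : rk y = rk z' + 2 := by have := hc _ _ hz'2; omega
        obtain ⟨a, b, hab, ha, hb⟩ := hd z' y hz'y hrz'
        have key : ∀ w : P, w ∈ Set.Ioo z' y → w ≠ z →
            ∃ y' : P, xh ≤ y' ∧ y' ⋖ y ∧ ¬ x ≤ y' := by
          intro w ⟨hw1, hw2⟩ hwz
          have hrw : rk w = rk z' + 1 := by
            have := hm _ _ hw1; have := hm _ _ hw2; omega
          have hwy : w ⋖ y := covBy_of_rank_succ hm hw2 (by omega)
          refine ⟨w, hz'1.trans hw1.le, hwy, fun hxw => ?_⟩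
          have hmeet : z' ≤ w ⊓ z := le_inf hw1.le hz'2.lt.le
          have hxm : x ≤ w ⊓ z := le_inf hxw hxz
          rcases eq_or_lt_of_le hmeet with heq | hlt2
          · exact hz'3 (heq ▸ hxm)
          · have hzw : w ⊓ z = z := by
              by_contra hne
              exact hz'2.2 hlt2 (lt_of_le_of_ne inf_le_right hne)
            have hzlew : z ≤ w := hzw ▸ inf_le_left
            have : rk z = rk w := by omega
            rcases eq_or_lt_of_le hzlew with heq2 | hlt3
            · exact hwz heq2.symm
            · have := hm _ _ hlt3; omega
        by_cases haz : a = z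
        · exact key b hb (fun h => hab (haz ▸ h ▸ rfl))
        · exact key a ha haz
    · obtain ⟨y', hy'1, hy'2⟩ := exists_le_cov hxy
      exact ⟨y', hy'1, hy'2, fun h => hxley (h.trans hy'2.lt.le)⟩

/-- For a finite ranked meet semi-lattice, the diamond property is equivalent to
condition (*): for every `x̂`, every `x` covering `x̂` and every `y > x̂`, there is
`y'` with `x̂ ≤ y'`, `y' ⋖ y` and `x ≰ y'`. -/
theorem diamond_iff_star {P : Type*} [SemilatticeInf P] [OrderBot P] [Fintype P]
    (rk : P → ℕ) (h0 : rk ⊥ = 0) (hc : CoverRank rk) (hm : RankStrictMono rk) :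
    DiamondProp rk ↔
      ∀ xh x y : P, xh ⋖ x → xh < y →
        ∃ y' : P, xh ≤ y' ∧ y' ⋖ y ∧ ¬ x ≤ y' := by
  constructor
  · intro hd xh x y hxx hxy
    exact star_of_diamond rk hc hm hd (rk y + 1) xh x y (by omega) hxx hxy
  · intro hstar x y hxy hr
    obtain ⟨z, hxz, hzy⟩ := exists_cov_le hxy
    have hrz : rk z = rk x + 1 := hc _ _ hxz
    have hzne : z ≠ y := fun h => by rw [h] at hrz; omega
    have hzlt : z < y := lt_of_le_of_ne hzy hzne
    have hzcov : z ⋖ y := covBy_of_rank_succ hm hzlt (by omega)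
    obtain ⟨y', hy'1, hy'2, hy'3⟩ := hstar x z y hxz hxy
    have hy'nez : y' ≠ z := fun h => hy'3 (h ▸ le_refl z)
    have hxy' : x < y' := by
      rcases eq_or_lt_of_le hy'1 with rfl | h
      · have := hc _ _ hy'2; omega
      · exact h
    exact ⟨z, y', fun h => hy'nez h.symm, ⟨hxz.lt, hzlt⟩, ⟨hxy', hy'2.lt⟩⟩
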